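/- Let the finite low-rank MDP of dimension d satisfy ‖φ*_h(x, a)‖₂ ≤ 1 for all h, x, a, and suppose η-feature coverage holds for some η ∈ (0, 1]: for every h ∈ [H−1], sup_{π∈Π} λ_min(E^π[φ*_h(x_h, a_h) φ*_h(x_h, a_h)^⊤]) ≥ η, where λ_min denotes the smallest eigenvalue. Then the MDP satisfies (η/2)^{3/2}-reachability: for every h ∈ [H−1] and every x ∈ X_{h+1}, sup_{π∈Π} d^π(x) ≥ (η/2)^{3/2} · ‖μ*_{h+1}(x)‖₂. -/

import Mathlib

open scoped BigOperators RealInnerProductSpace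

universe u v

variable {X : ℕ → Type u} {A : Type v} [∀ k, Fintype (X k)] [Fintype A]

/-- Layers are 0-indexed: Lean layer `k` corresponds to the paper's layer `k + 1`.
`occ ρ T π k x = P^π[x_{k+1} = x]` is the state occupancy measure of the policy `π`. -/
noncomputable def occ (ρ : X 0 → ℝ) (T : ∀ k, X k → A → X (k + 1) → ℝ)
    (π : ∀ k, X k → A → ℝ) : ∀ k, X k → ℝ
  | 0, x => ρ x
  | k + 1, x' => ∑ x : X k, ∑ a : A, occ ρ T π k x * π k x a * T k x a x'

/-- A Markov policy: a probability distribution over actions at every state. -/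
def IsPolicy (π : ∀ k, X k → A → ℝ) : Prop :=
  ∀ (k : ℕ) (x : X k), (∀ a, 0 ≤ π k x a) ∧ (∑ a : A, π k x a = 1)

/-- An initial state distribution. -/
def IsInit (ρ : X 0 → ℝ) : Prop :=
  (∀ x, 0 ≤ ρ x) ∧ (∑ x : X 0, ρ x = 1)

/-- The smallest eigenvalue of a symmetric matrix `M`, characterized by the Courant–Fischer
variational formula as the infimum of the quadratic form `v ↦ vᵀ M v` over the unit
sphere. -/
noncomputable def lambdaMin (d : ℕ) (M : Matrix (Fin d) (Fin d) ℝ) : ℝ :=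
  ⨅ v : {v : EuclideanSpace ℝ (Fin d) // ‖v‖ = 1}, ∑ i, ∑ j, v.1 i * M i j * v.1 j

/-- `E^π[φ_h(x_h,a_h) φ_h(x_h,a_h)ᵀ]`, the second moment matrix of the features under `π`. -/
noncomputable def featSecondMoment (d : ℕ) (ρ : X 0 → ℝ)
    (T : ∀ k, X k → A → X (k + 1) → ℝ) (φ : ∀ k, X k → A → EuclideanSpace ℝ (Fin d))
    (π : ∀ k, X k → A → ℝ) (h : ℕ) : Matrix (Fin d) (Fin d) ℝ :=
  ∑ x : X h, ∑ a : A, (occ ρ T π h x * π h x a) • Matrix.of fun i j => φ h x a i * φ h x a j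

lemma occ_nonneg (ρ : X 0 → ℝ) (hρ : IsInit ρ) (T : ∀ k, X k → A → X (k + 1) → ℝ)
    (π : ∀ k, X k → A → ℝ) (hπ : IsPolicy π) (j : ℕ)
    (hT : ∀ k, k < j → ∀ (x : X k) (a : A) (x' : X (k+1)), 0 ≤ T k x a x') :
    ∀ x, 0 ≤ occ ρ T π j x := by
  induction j with
  | zero => exact hρ.1
  | succ k ih =>
    intro x'
    refine Finset.sum_nonneg fun x _ => Finset.sum_nonneg fun a _ => ?_
    have h1 := ih (fun k' hk' => hT k' (hk'.trans (Nat.lt_succ_self k))) x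
    exact mul_nonneg (mul_nonneg h1 ((hπ k x).1 a)) (hT k (Nat.lt_succ_self k) x a x')

lemma occ_sum_one (ρ : X 0 → ℝ) (hρ : IsInit ρ) (T : ∀ k, X k → A → X (k + 1) → ℝ)
    (π : ∀ k, X k → A → ℝ) (hπ : IsPolicy π) (j : ℕ)
    (hT : ∀ k, k < j → ∀ (x : X k) (a : A), ∑ x', T k x a x' = 1) :
    ∑ x, occ ρ T π j x = 1 := by
  induction j with
  | zero => exact hρ.2
  | succ k ih =>
    have ih' := ih (fun k' hk' => hT k' (hk'.trans (Nat.lt_succ_self k)))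
    calc ∑ x' : X (k+1), ∑ x : X k, ∑ a : A, occ ρ T π k x * π k x a * T k x a x'
        = ∑ x : X k, ∑ x' : X (k+1), ∑ a : A, occ ρ T π k x * π k x a * T k x a x' :=
          Finset.sum_comm
      _ = ∑ x : X k, ∑ a : A, ∑ x' : X (k+1), occ ρ T π k x * π k x a * T k x a x' :=
          Finset.sum_congr rfl fun _ _ => Finset.sum_comm
      _ = ∑ x : X k, ∑ a : A, occ ρ T π k x * π k x a := by
          refine Finset.sum_congr rfl fun x _ => Finset.sum_congr rfl fun a _ => ?_
          rw [← Finset.mul_sum, hT k (Nat.lt_succ_self k) x a, mul_one]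
      _ = ∑ x : X k, occ ρ T π k x := by
          refine Finset.sum_congr rfl fun x _ => ?_
          rw [← Finset.mul_sum, (hπ k x).2, mul_one]
      _ = 1 := ih'

lemma occ_le_one (ρ : X 0 → ℝ) (hρ : IsInit ρ) (T : ∀ k, X k → A → X (k + 1) → ℝ)
    (π : ∀ k, X k → A → ℝ) (hπ : IsPolicy π) (j : ℕ)
    (hT0 : ∀ k, k < j → ∀ (x : X k) (a : A) (x' : X (k+1)), 0 ≤ T k x a x')
    (hT1 : ∀ k, k < j → ∀ (x : X k) (a : A), ∑ x', T k x a x' = 1) (x : X j) :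
    occ ρ T π j x ≤ 1 := by
  rw [← occ_sum_one ρ hρ T π hπ j hT1]
  exact Finset.single_le_sum (fun y _ => occ_nonneg ρ hρ T π hπ j hT0 y) (Finset.mem_univ x)

lemma quad_eq {n : Type*} {m : Type*} [Fintype n] [Fintype m] (d : ℕ) (w : n → m → ℝ)
    (φ : n → m → EuclideanSpace ℝ (Fin d)) (v : Fin d → ℝ) :
    ∑ i, ∑ j, v i * (∑ x, ∑ a, (w x a) • Matrix.of (fun i j => φ x a i * φ x a j) : Matrix (Fin d) (Fin d) ℝ) i j * v j
      = ∑ x, ∑ a, w x a * (∑ i, v i * φ x a i) ^ 2 := by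
  simp only [Matrix.sum_apply, Matrix.smul_apply, Matrix.of_apply, smul_eq_mul,
    Finset.mul_sum, Finset.sum_mul]
  calc ∑ i, ∑ j, ∑ x, ∑ a, v i * (w x a * (φ x a i * φ x a j)) * v j
      = ∑ i, ∑ x, ∑ j, ∑ a, v i * (w x a * (φ x a i * φ x a j)) * v j :=
        Finset.sum_congr rfl fun _ _ => Finset.sum_comm
    _ = ∑ x, ∑ i, ∑ j, ∑ a, v i * (w x a * (φ x a i * φ x a j)) * v j := Finset.sum_comm
    _ = ∑ x, ∑ i, ∑ a, ∑ j, v i * (w x a * (φ x a i * φ x a j)) * v j :=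
        Finset.sum_congr rfl fun _ _ => Finset.sum_congr rfl fun _ _ => Finset.sum_comm
    _ = ∑ x, ∑ a, ∑ i, ∑ j, v i * (w x a * (φ x a i * φ x a j)) * v j :=
        Finset.sum_congr rfl fun _ _ => Finset.sum_comm
    _ = ∑ x, ∑ a, w x a * (∑ i, v i * φ x a i) ^ 2 := by
        refine Finset.sum_congr rfl fun x _ => Finset.sum_congr rfl fun a _ => ?_
        rw [sq, Finset.sum_mul_sum, Finset.mul_sum]
        exact Finset.sum_congr rfl fun i _ => by
          rw [Finset.mul_sum]; exact Finset.sum_congr rfl fun j _ => by ring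

/-- (Feature coverage implies reachability.)  If the features are
bounded by `1` and `η`-feature coverage holds at every layer, i.e.
`sup_π λ_min(E^π[φ_h φ_hᵀ]) ≥ η`, then `(η/2)^{3/2}`-reachability holds: every state `x`
of the next layer satisfies `sup_π d^π(x) ≥ (η/2)^{3/2} ‖μ(x)‖₂`. -/
theorem stmt_10 (H d : ℕ) (hd : 1 ≤ d) (hH : 2 ≤ H)
    (ρ : X 0 → ℝ) (hρ : IsInit ρ)
    (T : ∀ k, X k → A → X (k + 1) → ℝ)
    (hT : ∀ k, k + 2 ≤ H → ∀ (x : X k) (a : A),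
      (∀ x', 0 ≤ T k x a x') ∧ (∑ x', T k x a x' = 1))
    (φ : ∀ k, X k → A → EuclideanSpace ℝ (Fin d))
    (μ : ∀ k, X k → EuclideanSpace ℝ (Fin d))
    (hlow : ∀ k, k + 2 ≤ H → ∀ (x : X k) (a : A) (x' : X (k + 1)),
      T k x a x' = ⟪μ (k + 1) x', φ k x a⟫)
    (hφn : ∀ k, k + 2 ≤ H → ∀ (x : X k) (a : A), ‖φ k x a‖ ≤ 1)
    (η : ℝ) (hη : η ∈ Set.Ioc (0 : ℝ) 1)
    (hcov : ∀ k, k + 2 ≤ H →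
      η ≤ ⨆ π' : {π' : ∀ k, X k → A → ℝ // IsPolicy π'},
        lambdaMin d (featSecondMoment d ρ T φ π'.1 k)) :
    ∀ k, k + 2 ≤ H → ∀ x : X (k + 1),
      (η / 2) ^ ((3 : ℝ) / 2) * ‖μ (k + 1) x‖ ≤
        ⨆ π' : {π' : ∀ k, X k → A → ℝ // IsPolicy π'}, occ ρ T π'.1 (k + 1) x := by
  intro k hk x
  have hη0 : 0 < η := hη.1
  have hη1 : η ≤ 1 := hη.2
  -- (η/2)^(3/2) ≤ η
  have hpow : (η / 2) ^ ((3 : ℝ) / 2) ≤ η := by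
    have h1 : (η / 2) ^ ((3 : ℝ) / 2) ≤ (η / 2) ^ ((1 : ℝ)) :=
      Real.rpow_le_rpow_of_exponent_ge (by linarith) (by linarith) (by norm_num)
    rw [Real.rpow_one] at h1
    linarith
  have hpow0 : 0 ≤ (η / 2) ^ ((3 : ℝ) / 2) := Real.rpow_nonneg (by linarith) _
  -- the index type of policies
  rcases isEmpty_or_nonempty {π' : ∀ k, X k → A → ℝ // IsPolicy π'} with hI | hI
  · exfalso
    have := hcov k hk
    rw [Real.iSup_of_isEmpty] at this
    linarith
  -- transition facts below layer k+1
  have hT0 : ∀ k', k' < k + 1 → ∀ (x : X k') (a : A) (x' : X (k'+1)), 0 ≤ T k' x a x' :=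
    fun k' hk' x a x' => (hT k' (by omega) x a).1 x'
  have hT1 : ∀ k', k' < k + 1 → ∀ (x : X k') (a : A), ∑ x', T k' x a x' = 1 :=
    fun k' hk' x a => (hT k' (by omega) x a).2
  have hT0' : ∀ k', k' < k → ∀ (x : X k') (a : A) (x' : X (k'+1)), 0 ≤ T k' x a x' :=
    fun k' hk' => hT0 k' (by omega)
  have hT1' : ∀ k', k' < k → ∀ (x : X k') (a : A), ∑ x', T k' x a x' = 1 :=
    fun k' hk' => hT1 k' (by omega)
  -- boundedness of the occupancy family
  have hocc_le : ∀ π' : {π' : ∀ k, X k → A → ℝ // IsPolicy π'},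
      occ ρ T π'.1 (k + 1) x ≤ 1 :=
    fun π' => occ_le_one ρ hρ T π'.1 π'.2 (k+1) hT0 hT1 x
  have hocc_nn : ∀ π' : {π' : ∀ k, X k → A → ℝ // IsPolicy π'},
      0 ≤ occ ρ T π'.1 (k + 1) x :=
    fun π' => occ_nonneg ρ hρ T π'.1 π'.2 (k+1) hT0 x
  have hbdd : BddAbove (Set.range fun π' : {π' : ∀ k, X k → A → ℝ // IsPolicy π'} =>
      occ ρ T π'.1 (k + 1) x) := by
    refine ⟨1, ?_⟩
    rintro y ⟨π', rfl⟩
    exact hocc_le π'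
  by_cases hμ : μ (k + 1) x = 0
  · rw [hμ]
    simp only [norm_zero, mul_zero]
    exact Real.iSup_nonneg hocc_nn
  · have hnμ : 0 < ‖μ (k + 1) x‖ := norm_pos_iff.mpr hμ
    set nμ := ‖μ (k + 1) x‖ with hnμdef
    -- the unit test vector
    set v : EuclideanSpace ℝ (Fin d) := (nμ⁻¹ : ℝ) • (μ (k + 1) x) with hvdef
    have hv : ‖v‖ = 1 := by
      rw [hvdef, norm_smul, Real.norm_eq_abs, abs_of_pos (inv_pos.mpr hnμ)]
      field_simp
      exact hnμdef.symm
    -- key inequality for any policy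
    have key : ∀ π' : {π' : ∀ k, X k → A → ℝ // IsPolicy π'},
        lambdaMin d (featSecondMoment d ρ T φ π'.1 k) ≤ occ ρ T π'.1 (k + 1) x / nμ := by
      intro π'
      -- quadratic form values
      have hq : ∀ u : EuclideanSpace ℝ (Fin d),
          (∑ i, ∑ j, u i * featSecondMoment d ρ T φ π'.1 k i j * u j)
            = ∑ x0 : X k, ∑ a : A,
              (occ ρ T π'.1 k x0 * π'.1 k x0 a) * (∑ i, u i * φ k x0 a i) ^ 2 := by
        intro u
        simp only [featSecondMoment]
        exact quad_eq d (fun x0 a => occ ρ T π'.1 k x0 * π'.1 k x0 a)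
          (fun x0 a => φ k x0 a) u
      have hwnn : ∀ (x0 : X k) (a : A), 0 ≤ occ ρ T π'.1 k x0 * π'.1 k x0 a :=
        fun x0 a => mul_nonneg (occ_nonneg ρ hρ T π'.1 π'.2 k hT0' x0) ((π'.2 k x0).1 a)
      have hbb : BddBelow (Set.range fun u : {u : EuclideanSpace ℝ (Fin d) // ‖u‖ = 1} =>
          ∑ i, ∑ j, u.1 i * featSecondMoment d ρ T φ π'.1 k i j * u.1 j) := by
        refine ⟨0, ?_⟩
        rintro y ⟨u, rfl⟩
        dsimp only
        rw [hq u.1]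
        exact Finset.sum_nonneg fun x0 _ => Finset.sum_nonneg fun a _ =>
          mul_nonneg (hwnn x0 a) (sq_nonneg _)
      have hle : lambdaMin d (featSecondMoment d ρ T φ π'.1 k) ≤
          ∑ i, ∑ j, v i * featSecondMoment d ρ T φ π'.1 k i j * v j :=
        ciInf_le hbb (⟨v, hv⟩ : {u : EuclideanSpace ℝ (Fin d) // ‖u‖ = 1})
      refine hle.trans ?_
      rw [hq v]
      -- each inner term: v·φ = nμ⁻¹ * T
      have hvφ : ∀ (x0 : X k) (a : A),
          (∑ i, v i * φ k x0 a i) = nμ⁻¹ * T k x0 a x := by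
        intro x0 a
        rw [hlow k hk x0 a x]
        have : ⟪μ (k+1) x, φ k x0 a⟫ = ∑ i, μ (k+1) x i * φ k x0 a i := by
          simp [PiLp.inner_apply, RCLike.inner_apply, starRingEnd_apply]
          exact Finset.sum_congr rfl fun i _ => mul_comm _ _
        rw [this, Finset.mul_sum]
        exact Finset.sum_congr rfl fun i _ => by
          rw [hvdef]
          simp [PiLp.smul_apply, smul_eq_mul, mul_assoc]
      have hTle : ∀ (x0 : X k) (a : A), T k x0 a x ≤ nμ := by
        intro x0 a
        rw [hlow k hk x0 a x]
        calc ⟪μ (k+1) x, φ k x0 a⟫ ≤ ‖μ (k+1) x‖ * ‖φ k x0 a‖ := real_inner_le_norm _ _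
          _ ≤ nμ * 1 := by
              exact mul_le_mul_of_nonneg_left (hφn k hk x0 a) (le_of_lt hnμ)
          _ = nμ := mul_one _
      have hTnn : ∀ (x0 : X k) (a : A), 0 ≤ T k x0 a x :=
        fun x0 a => (hT k hk x0 a).1 x
      have step : ∑ x0 : X k, ∑ a : A,
            (occ ρ T π'.1 k x0 * π'.1 k x0 a) * (∑ i, v i * φ k x0 a i) ^ 2
          ≤ ∑ x0 : X k, ∑ a : A,
            nμ⁻¹ * (occ ρ T π'.1 k x0 * π'.1 k x0 a * T k x0 a x) := by
        refine Finset.sum_le_sum fun x0 _ => Finset.sum_le_sum fun a _ => ?_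
        rw [hvφ x0 a]
        have hsq : (nμ⁻¹ * T k x0 a x) ^ 2 ≤ nμ⁻¹ * T k x0 a x := by
          rw [sq]
          have h2 : nμ⁻¹ * T k x0 a x ≤ 1 := by
            rw [← mul_le_mul_iff_of_pos_left hnμ, mul_one, ← mul_assoc,
              mul_inv_cancel₀ (ne_of_gt hnμ), one_mul]
            exact hTle x0 a
          have h3 : 0 ≤ nμ⁻¹ * T k x0 a x :=
            mul_nonneg (inv_nonneg.mpr (le_of_lt hnμ)) (hTnn x0 a)
          nlinarith
        calc (occ ρ T π'.1 k x0 * π'.1 k x0 a) * (nμ⁻¹ * T k x0 a x) ^ 2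
            ≤ (occ ρ T π'.1 k x0 * π'.1 k x0 a) * (nμ⁻¹ * T k x0 a x) :=
              mul_le_mul_of_nonneg_left hsq (hwnn x0 a)
          _ = nμ⁻¹ * (occ ρ T π'.1 k x0 * π'.1 k x0 a * T k x0 a x) := by ring
      refine step.trans ?_
      have hocc_def : occ ρ T π'.1 (k + 1) x =
          ∑ x0 : X k, ∑ a : A, occ ρ T π'.1 k x0 * π'.1 k x0 a * T k x0 a x := rfl
      rw [div_eq_inv_mul, hocc_def, Finset.mul_sum]
      exact le_of_eq (Finset.sum_congr rfl fun x0 _ => by rw [Finset.mul_sum])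
    -- combine with coverage
    have hsup : η ≤ (⨆ π' : {π' : ∀ k, X k → A → ℝ // IsPolicy π'},
        occ ρ T π'.1 (k + 1) x) / nμ := by
      refine (hcov k hk).trans (ciSup_le fun π' => (key π').trans ?_)
      gcongr
      exact le_ciSup hbdd π'
    have hfin : η * nμ ≤ ⨆ π' : {π' : ∀ k, X k → A → ℝ // IsPolicy π'},
        occ ρ T π'.1 (k + 1) x := (le_div_iff₀ hnμ).mp hsup
    calc (η / 2) ^ ((3 : ℝ) / 2) * nμ ≤ η * nμ :=
          mul_le_mul_of_nonneg_right hpow (le_of_lt hnμ)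
      _ ≤ _ := hfin
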